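/- Let q be an odd prime power and n ≥ 1. The integer d_n := ∑_{i=0}^{2n} (-q)^i = (q^{2n+1}+1)/(q+1) is odd, the integer 2d_n is supersingular (it divides q^{2n+1}+1), and I_q(2d_n) ≥ d_n/(2n+1) ≥ (log √q) · d_n / log d_n. -/

import Mathlib

/-- `I_q(D) = ∑_{e ∣ D, e > 1} φ(e) / o_q(e)`, where `o_q(e)` is the multiplicative
order of `q` modulo `e` (the term `e = 1` contributes `0`). -/
noncomputable def Iq (q D : ℕ) : ℝ :=
  ∑ e ∈ D.divisors.filter (fun e => 1 < e),
    (Nat.totient e : ℝ) / (orderOf (q : ZMod e) : ℝ)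

theorem supersingular_odd_sequence (q n : ℕ) (hq : Odd q) (hqpp : IsPrimePow q)
    (hn : 1 ≤ n) (d : ℕ)
    (hd : (d : ℤ) = ∑ i ∈ Finset.range (2 * n + 1), (-(q : ℤ)) ^ i) :
    Odd d ∧ ((q : ℤ) + 1) * (d : ℤ) = (q : ℤ) ^ (2 * n + 1) + 1 ∧
    (2 * d) ∣ q ^ (2 * n + 1) + 1 ∧
    Iq q (2 * d) ≥ (d : ℝ) / (2 * n + 1) ∧
    (d : ℝ) / (2 * n + 1) ≥ Real.log (Real.sqrt q) * (d : ℝ) / Real.log (d : ℝ) := by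
  obtain ⟨k, hk⟩ := hq
  have hq3 : 3 ≤ q := by
    have h2 := hqpp.two_le
    rcases Nat.lt_or_ge q 3 with h | h
    · interval_cases q <;> omega
    · exact h
  have hoddexp : Odd (2 * n + 1) := ⟨n, by ring⟩
  -- the product identity over ℤ
  have hgs := geom_sum_mul (-(q : ℤ)) (2 * n + 1)
  rw [← hd, hoddexp.neg_pow] at hgs
  have h2 : ((q : ℤ) + 1) * (d : ℤ) = (q : ℤ) ^ (2 * n + 1) + 1 := by linear_combination -hgs
  have hN : (q + 1) * d = q ^ (2 * n + 1) + 1 := by exact_mod_cast h2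
  -- oddness of d
  have hdz2 : ((d : ℕ) : ZMod 2) = 1 := by
    have hcast : ((d : ℕ) : ZMod 2) = ∑ i ∈ Finset.range (2 * n + 1), (-(q : ZMod 2)) ^ i := by
      have := congrArg (fun z : ℤ => (z : ZMod 2)) hd
      push_cast at this
      exact this
    have hq2 : (q : ZMod 2) = 1 := by
      subst hk; push_cast; simp [show ((2 : ℕ) : ZMod 2) = 0 from by decide, show (2 : ZMod 2) = 0 from by decide]
    rw [hcast, hq2]
    simp only [show (-(1 : ZMod 2)) = 1 from by decide, one_pow, Finset.sum_const,
      Finset.card_range, nsmul_eq_mul, mul_one]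
    push_cast
    simp [show ((2 : ℕ) : ZMod 2) = 0 from by decide, show (2 : ZMod 2) = 0 from by decide]
  have hOddd : Odd d := by
    rcases Nat.even_or_odd d with he | ho
    · exfalso
      have := (ZMod.natCast_eq_zero_iff d 2).mpr he.two_dvd
      rw [hdz2] at this
      exact one_ne_zero this
    · exact ho
  have hdpos : 0 < d := by
    rcases Nat.eq_zero_or_pos d with rfl | h
    · simp [Nat.odd_iff] at hOddd
    · exact h
  -- divisibility
  have hdvd : (2 * d) ∣ q ^ (2 * n + 1) + 1 := by
    refine ⟨k + 1, ?_⟩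
    rw [← hN, hk]; ring
  -- d ≥ q + 1
  have hq3pow : q ^ 3 ≤ q ^ (2 * n + 1) := Nat.pow_le_pow_right (by omega) (by omega)
  have hdge : q + 1 ≤ d := by
    have h1 : (q + 1) * (q + 1) ≤ (q + 1) * d := by
      rw [hN]; nlinarith [hq3pow]
    exact Nat.le_of_mul_le_mul_left h1 (by omega)
  have hdsq : q ^ (2 * n + 1) ≤ d ^ 2 := by
    have : (q + 1) * d ≤ d * d := Nat.mul_le_mul_right d hdge
    nlinarith [hN]
  refine ⟨hOddd, h2, hdvd, ?_, ?_⟩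
  · -- the Iq lower bound
    have hD0 : 2 * d ≠ 0 := by omega
    set K : ℕ := 2 * (2 * n + 1) with hK
    set S := (2 * d).divisors.filter (fun e => 1 < e) with hSdef
    have key : ∀ e ∈ S, 0 < orderOf (q : ZMod e) ∧ orderOf (q : ZMod e) ≤ K := by
      intro e he
      rw [hSdef, Finset.mem_filter, Nat.mem_divisors] at he
      obtain ⟨⟨hediv, -⟩, he1⟩ := he
      have hediv' : (e : ℤ) ∣ (q : ℤ) ^ K - 1 := by
        have h1 : (e : ℤ) ∣ ((q : ℤ) ^ (2 * n + 1) + 1) := by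
          have : (e : ℤ) ∣ ((q ^ (2 * n + 1) + 1 : ℕ) : ℤ) :=
            Int.natCast_dvd_natCast.mpr (hediv.trans hdvd)
          push_cast at this; exact this
        have h2 : (q : ℤ) ^ K - 1 = ((q : ℤ) ^ (2 * n + 1) + 1) * ((q : ℤ) ^ (2 * n + 1) - 1) := by
          rw [hK, pow_mul']; ring
        rw [h2]; exact h1.mul_right _
      have hpow : (q : ZMod e) ^ K = 1 := by
        have := (ZMod.intCast_zmod_eq_zero_iff_dvd _ e).mpr hediv'
        push_cast at this
        linear_combination this
      have hKpos : 0 < K := by omega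
      have hfin : IsOfFinOrder (q : ZMod e) :=
        isOfFinOrder_iff_pow_eq_one.mpr ⟨K, hKpos, hpow⟩
      exact ⟨hfin.orderOf_pos, Nat.le_of_dvd hKpos (orderOf_dvd_of_pow_eq_one hpow)⟩
    have h2mem : 2 ∈ S := by
      rw [hSdef, Finset.mem_filter, Nat.mem_divisors]
      exact ⟨⟨Dvd.intro d rfl, hD0⟩, by omega⟩
    have t2 : (Nat.totient 2 : ℝ) / (orderOf ((q : ZMod 2)) : ℝ) = 1 := by
      have hq2 : (q : ZMod 2) = 1 := by
        subst hk; push_cast; simp [show ((2 : ℕ) : ZMod 2) = 0 from by decide, show (2 : ZMod 2) = 0 from by decide]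
      rw [hq2, orderOf_one, Nat.totient_two]
      norm_num
    -- the sum of totients over S.erase 2 is 2d - 2
    have hS : S = (2 * d).divisors.erase 1 := by
      ext e
      simp only [hSdef, Finset.mem_filter, Finset.mem_erase, Nat.mem_divisors]
      constructor
      · rintro ⟨⟨h1, h2⟩, h3⟩; exact ⟨by omega, h1, h2⟩
      · rintro ⟨h1, h2, h3⟩
        have : 0 < e := Nat.pos_of_dvd_of_pos h2 (by omega)
        exact ⟨⟨h2, h3⟩, by omega⟩
    have e1 : Nat.totient 1 + ∑ e ∈ (2 * d).divisors.erase 1, Nat.totient e = 2 * d := by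
      rw [Finset.add_sum_erase _ _ (Nat.one_mem_divisors.mpr hD0)]
      exact Nat.sum_totient _
    have e2 : Nat.totient 2 + ∑ e ∈ ((2 * d).divisors.erase 1).erase 2, Nat.totient e
        = ∑ e ∈ (2 * d).divisors.erase 1, Nat.totient e := by
      apply Finset.add_sum_erase
      rw [← hS]; exact h2mem
    have hsum : ∑ e ∈ S.erase 2, Nat.totient e = 2 * d - 2 := by
      rw [hS]
      simp only [Nat.totient_one, Nat.totient_two] at e1 e2
      omega
    -- assemble
    have hstep : ((∑ e ∈ S.erase 2, Nat.totient e : ℕ) : ℝ) / (K : ℝ)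
        ≤ ∑ e ∈ S.erase 2, (Nat.totient e : ℝ) / (orderOf (q : ZMod e) : ℝ) := by
      rw [Nat.cast_sum, Finset.sum_div]
      apply Finset.sum_le_sum
      intro e he
      have he' : e ∈ S := Finset.mem_of_mem_erase he
      obtain ⟨hpos, hle⟩ := key e he'
      apply div_le_div_of_nonneg_left (by positivity) _ (by exact_mod_cast hle)
      exact_mod_cast hpos
    have hIq : Iq q (2 * d) = (Nat.totient 2 : ℝ) / (orderOf ((q : ZMod 2)) : ℝ)
        + ∑ e ∈ S.erase 2, (Nat.totient e : ℝ) / (orderOf (q : ZMod e) : ℝ) := by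
      rw [Iq, ← hSdef]
      exact (Finset.add_sum_erase S _ h2mem).symm
    have hKR : (0 : ℝ) < (K : ℝ) := by positivity
    have hcastsum : ((∑ e ∈ S.erase 2, Nat.totient e : ℕ) : ℝ) = 2 * (d : ℝ) - 2 := by
      rw [hsum]
      have : (2 : ℕ) ≤ 2 * d := by omega
      push_cast [Nat.cast_sub this]
      ring
    rw [hIq, t2]
    have hfin : (d : ℝ) / (2 * n + 1) ≤ 1 + (2 * (d : ℝ) - 2) / (K : ℝ) := by
      have hKc : (K : ℝ) = 2 * (2 * (n : ℝ) + 1) := by rw [hK]; push_cast; ring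
      have hnn : (1:ℝ) ≤ (n:ℝ) := by exact_mod_cast hn
      have h1 : (0:ℝ) < 2 * (n:ℝ) + 1 := by linarith
      have key2 : (2 * (d:ℝ) - 2) / (K:ℝ) = (d:ℝ)/(2*(n:ℝ)+1) - 1/(2*(n:ℝ)+1) := by
        rw [hKc]; field_simp
      rw [key2]
      have hle1 : 1/(2*(n:ℝ)+1) ≤ 1 := by rw [div_le_one h1]; linarith
      linarith
    calc (d : ℝ) / (2 * n + 1) ≤ 1 + (2 * (d : ℝ) - 2) / (K : ℝ) := hfin
      _ ≤ 1 + ∑ e ∈ S.erase 2, (Nat.totient e : ℝ) / (orderOf (q : ZMod e) : ℝ) := by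
          rw [← hcastsum]; linarith [hstep]
  · -- the log inequality
    have hd4 : 4 ≤ d := by omega
    have hdR1 : (1 : ℝ) < (d : ℝ) := by exact_mod_cast (by omega : 1 < d)
    have hlogd : 0 < Real.log d := Real.log_pos hdR1
    have hlog2 : ((2 * n + 1 : ℕ) : ℝ) * Real.log q ≤ 2 * Real.log d := by
      have hle : ((q : ℝ)) ^ (2 * n + 1) ≤ (d : ℝ) ^ 2 := by exact_mod_cast hdsq
      have := Real.log_le_log (by positivity) hle
      rw [Real.log_pow, Real.log_pow] at this
      push_cast at this ⊢
      linarith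
    rw [ge_iff_le, Real.log_sqrt (by positivity)]
    rw [div_le_div_iff₀ hlogd (by positivity)]
    have hda : (0:ℝ) ≤ (d:ℝ) := by positivity
    have hmul := mul_le_mul_of_nonneg_right hlog2 hda
    push_cast at hmul ⊢
    nlinarith [hmul]
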